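/- Γ ⊢_{NF} E if and only if Γ ⊢_{HF} E; that is, the restricted Hilbert system for Corsi's logic F and the natural deduction system NF derive the same formulas from any set of assumptions Γ. -/

import Mathlib

/-- Formulas of subintuitionistic propositional logic. -/
inductive Fml : Type
  | atom : ℕ → Fml
  | bot  : Fml
  | and  : Fml → Fml → Fml
  | or   : Fml → Fml → Fml
  | imp  : Fml → Fml → Fml
deriving DecidableEq

/-- `A ↔ B` abbreviates `(A → B) ∧ (B → A)`. -/
def Fml.biimp (A B : Fml) : Fml := (A.imp B).and (B.imp A)

/-- The extra axiom schemes / rules among I, C, D, Ĉ, D̂, N, N₂. -/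
inductive ExtAx : Type
  | I | C | D | Chat | Dhat | N | N2
deriving DecidableEq

/-- Theorems of the Hilbert system WF extended with the schemes/rules in `E`
(derivations with no assumptions; all rules unrestricted here). -/
inductive HThm (E : Set ExtAx) : Fml → Prop
  | ax1 (A B : Fml)   : HThm E (A.imp (A.or B))
  | ax2 (A B : Fml)   : HThm E (B.imp (A.or B))
  | ax3 (A B : Fml)   : HThm E ((A.and B).imp A)
  | ax4 (A B : Fml)   : HThm E ((A.and B).imp B)
  | ax7 (A B C : Fml) : HThm E ((A.and (B.or C)).imp ((A.and B).or (A.and C)))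
  | ax8 (A : Fml)     : HThm E (A.imp A)
  | ax14 (A : Fml)    : HThm E (Fml.bot.imp A)
  | mp {A B : Fml}    : HThm E A → HThm E (A.imp B) → HThm E B
  | af {A : Fml} (B : Fml) : HThm E A → HThm E (B.imp A)
  | tr {A B C : Fml}  : HThm E (A.imp B) → HThm E (B.imp C) → HThm E (A.imp C)
  | rc {A B C : Fml}  : HThm E (A.imp B) → HThm E (A.imp C) → HThm E (A.imp (B.and C))
  | rd {A B C : Fml}  : HThm E (A.imp C) → HThm E (B.imp C) → HThm E ((A.or B).imp C)
  | conj {A B : Fml}  : HThm E A → HThm E B → HThm E (A.and B)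
  | re {A B C D : Fml} : HThm E (A.biimp B) → HThm E (C.biimp D) →
      HThm E ((A.imp C).biimp (B.imp D))
  | axI (A B C : Fml) : ExtAx.I ∈ E →
      HThm E (((A.imp B).and (B.imp C)).imp (A.imp C))
  | axC (A B C : Fml) : ExtAx.C ∈ E →
      HThm E (((A.imp B).and (A.imp C)).imp (A.imp (B.and C)))
  | axD (A B C : Fml) : ExtAx.D ∈ E →
      HThm E (((A.imp C).and (B.imp C)).imp ((A.or B).imp C))
  | axChat (A B C : Fml) : ExtAx.Chat ∈ E →
      HThm E ((A.imp (B.and C)).imp ((A.imp B).and (A.imp C)))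
  | axDhat (A B C : Fml) : ExtAx.Dhat ∈ E →
      HThm E (((A.or B).imp C).imp ((A.imp C).and (B.imp C)))
  | ruleN {A B C D : Fml} : ExtAx.N ∈ E →
      HThm E (A.imp (B.or C)) → HThm E (C.imp (A.or D)) →
      HThm E ((A.and D).imp B) → HThm E ((C.and B).imp D) →
      HThm E ((A.imp B).biimp (C.imp D))
  | ruleN2 {A B C D : Fml} : ExtAx.N2 ∈ E →
      HThm E (C.imp (A.or D)) → HThm E ((C.and B).imp D) →
      HThm E ((A.imp B).imp (C.imp D))

/-- Restricted derivability from assumptions in the Hilbert system WF + `E`: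
besides assumptions and theorems, only the conjunction rule is unrestricted, and
modus ponens may be used only when the major premise `A → B` is a theorem
(derived with no assumptions); all other rules are confined to theorems. -/
inductive HDer (E : Set ExtAx) (Γ : Set Fml) : Fml → Prop
  | hyp {A : Fml}  : A ∈ Γ → HDer E Γ A
  | thm {A : Fml}  : HThm E A → HDer E Γ A
  | conj {A B : Fml} : HDer E Γ A → HDer E Γ B → HDer E Γ (A.and B)
  | mp {A B : Fml} : HDer E Γ A → HThm E (A.imp B) → HDer E Γ B

/-- Tags for the optional implication-introduction rules of the natural
deduction systems. -/
inductive NRule : Type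
  | impI1 | impI2 | impN | impN2 | impChat | impDhat | impAnd | impOr | impTr
deriving DecidableEq

/-- Natural deduction derivations for the system with optional rules `R`.
`Deriv R Γ A` is a derivation of `A` all of whose open assumptions lie in `Γ`. -/
inductive Deriv (R : Set NRule) : Set Fml → Fml → Type
  | hyp (Γ : Set Fml) (A : Fml) : A ∈ Γ → Deriv R Γ A
  | andI {Γ : Set Fml} {A B : Fml} :
      Deriv R Γ A → Deriv R Γ B → Deriv R Γ (A.and B)
  | andE1 {Γ : Set Fml} {A B : Fml} :
      Deriv R Γ (A.and B) → Deriv R Γ A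
  | andE2 {Γ : Set Fml} {A B : Fml} :
      Deriv R Γ (A.and B) → Deriv R Γ B
  | orI1 {Γ : Set Fml} {A : Fml} (B : Fml) :
      Deriv R Γ A → Deriv R Γ (A.or B)
  | orI2 {Γ : Set Fml} (A : Fml) {B : Fml} :
      Deriv R Γ B → Deriv R Γ (A.or B)
  | orE {Γ : Set Fml} {A B C : Fml} :
      Deriv R Γ (A.or B) → Deriv R (insert A Γ) C → Deriv R (insert B Γ) C →
      Deriv R Γ C
  | botE {Γ : Set Fml} (A : Fml) :
      Deriv R Γ Fml.bot → Deriv R Γ A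
  | impI {Γ : Set Fml} {A B : Fml} :
      Deriv R {A} B → Deriv R Γ (A.imp B)
  | impE {Γ : Set Fml} {A B : Fml} :
      Deriv R Γ A → Deriv R (∅ : Set Fml) (A.imp B) → Deriv R Γ B
  | impI1 {Γ : Set Fml} {A B D : Fml} :
      NRule.impI1 ∈ R → Deriv R {B} D → Deriv R {D} B →
      Deriv R Γ ((A.imp B).imp (A.imp D))
  | impI2 {Γ : Set Fml} {A B D : Fml} :
      NRule.impI2 ∈ R → Deriv R {B} D → Deriv R {D} B →
      Deriv R Γ ((B.imp A).imp (D.imp A))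
  | impIN {Γ : Set Fml} {A B C D : Fml} :
      NRule.impN ∈ R →
      Deriv R {A} (C.or B) → Deriv R {D} B → Deriv R {C} (A.or D) → Deriv R {B} D →
      Deriv R Γ ((A.imp B).imp (C.imp D))
  | impIN2 {Γ : Set Fml} {A B C D : Fml} :
      NRule.impN2 ∈ R →
      Deriv R {C} (A.or D) → Deriv R {B} D →
      Deriv R Γ ((A.imp B).imp (C.imp D))
  | impIChat {Γ : Set Fml} {A B : Fml} (C : Fml) :
      NRule.impChat ∈ R → Deriv R {A} B →
      Deriv R Γ ((C.imp A).imp (C.imp B))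
  | impIDhat {Γ : Set Fml} {A B : Fml} (C : Fml) :
      NRule.impDhat ∈ R → Deriv R {A} B →
      Deriv R Γ ((B.imp C).imp (A.imp C))
  | impIAnd {Γ : Set Fml} {A B C : Fml} :
      NRule.impAnd ∈ R → Deriv R Γ (A.imp B) → Deriv R Γ (A.imp C) →
      Deriv R Γ (A.imp (B.and C))
  | impIOr {Γ : Set Fml} {A B C : Fml} :
      NRule.impOr ∈ R → Deriv R Γ (A.imp C) → Deriv R Γ (B.imp C) →
      Deriv R Γ ((A.or B).imp C)
  | impITr {Γ : Set Fml} {A B C : Fml} :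
      NRule.impTr ∈ R → Deriv R Γ (A.imp B) → Deriv R Γ (B.imp C) →
      Deriv R Γ (A.imp C)

/-- `Γ ⊢ A` in the natural deduction system with optional rules `R`. -/
def NDer (R : Set NRule) (Γ : Set Fml) (A : Fml) : Prop :=
  Nonempty (Deriv R Γ A)

/-- A derivation may serve as the major premise of an elimination rule in a
normal derivation: it is an assumption or ends with an elimination rule
different from ∨E (i.e. ∧E or →E). -/
def Deriv.MajorOK : ∀ {R : Set NRule} {Γ : Set Fml} {A : Fml}, Deriv R Γ A → Prop
  | _, _, _, .hyp _ _ _ => True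
  | _, _, _, .andE1 _   => True
  | _, _, _, .andE2 _   => True
  | _, _, _, .impE _ _  => True
  | _, _, _, _          => False

/-- A derivation is normal if every major premise of an elimination rule is
either an assumption or the conclusion of an elimination rule different
from ∨E. -/
def Deriv.Normal {R : Set NRule} : ∀ {Γ : Set Fml} {A : Fml}, Deriv R Γ A → Prop
  | _, _, .hyp _ _ _ => True
  | _, _, .andI d e => d.Normal ∧ e.Normal
  | _, _, .andE1 d => d.MajorOK ∧ d.Normal
  | _, _, .andE2 d => d.MajorOK ∧ d.Normal
  | _, _, .orI1 _ d => d.Normal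
  | _, _, .orI2 _ d => d.Normal
  | _, _, .orE d e f => d.MajorOK ∧ d.Normal ∧ e.Normal ∧ f.Normal
  | _, _, .botE _ d => d.Normal
  | _, _, .impI d => d.Normal
  | _, _, .impE d e => e.MajorOK ∧ d.Normal ∧ e.Normal
  | _, _, .impI1 _ d e => d.Normal ∧ e.Normal
  | _, _, .impI2 _ d e => d.Normal ∧ e.Normal
  | _, _, .impIN _ d e f g => d.Normal ∧ e.Normal ∧ f.Normal ∧ g.Normal
  | _, _, .impIN2 _ d e => d.Normal ∧ e.Normal
  | _, _, .impIChat _ _ d => d.Normal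
  | _, _, .impIDhat _ _ d => d.Normal
  | _, _, .impIAnd _ d e => d.Normal ∧ e.Normal
  | _, _, .impIOr _ d e => d.Normal ∧ e.Normal
  | _, _, .impITr _ d e => d.Normal ∧ e.Normal

namespace HFaux

/-- A provable "top". -/
def Top : Fml := Fml.bot.imp Fml.bot

/-- Conjunction of a list of formulas. -/
def conj : List Fml → Fml
  | [] => Top
  | x :: L => x.and (conj L)

variable {E : Set ExtAx}

theorem thmTop : HThm E Top := HThm.ax8 _

theorem mem_imp {x : Fml} : ∀ {L : List Fml}, x ∈ L → HThm E ((conj L).imp x)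
  | [], h => absurd h (by simp)
  | y :: L, h => by
    rcases List.mem_cons.1 h with rfl | h
    · exact HThm.ax3 _ _
    · exact HThm.tr (HThm.ax4 _ _) (mem_imp h)

theorem imp_conj {L : List Fml} {D : Fml} (h : ∀ x ∈ L, HThm E (D.imp x)) :
    HThm E (D.imp (conj L)) := by
  induction L with
  | nil => exact HThm.af _ thmTop
  | cons y L ih =>
    exact HThm.rc (h y (by simp)) (ih fun x hx => h x (by simp [hx]))

theorem conj_sub {L1 L2 : List Fml} (h : ∀ x ∈ L1, x ∈ L2) :
    HThm E ((conj L2).imp (conj L1)) :=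
  imp_conj fun x hx => mem_imp (h x hx)

/-- Characterization of restricted derivability. -/
theorem hder_iff {Γ : Set Fml} {A : Fml} :
    HDer E Γ A ↔ ∃ L : List Fml, (∀ x ∈ L, x ∈ Γ) ∧ HThm E ((conj L).imp A) := by
  constructor
  · intro h
    induction h with
    | hyp h => exact ⟨[_], by simpa using h, HThm.ax3 _ _⟩
    | thm h => exact ⟨[], by simp, HThm.af _ h⟩
    | conj h1 h2 ih1 ih2 =>
      obtain ⟨L1, hL1, hT1⟩ := ih1
      obtain ⟨L2, hL2, hT2⟩ := ih2
      refine ⟨L1 ++ L2, ?_, ?_⟩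
      · intro x hx; rcases List.mem_append.1 hx with hx | hx
        exacts [hL1 x hx, hL2 x hx]
      · exact HThm.rc
          (HThm.tr (conj_sub fun x hx => List.mem_append_left _ hx) hT1)
          (HThm.tr (conj_sub fun x hx => List.mem_append_right _ hx) hT2)
    | mp h hT ih =>
      obtain ⟨L, hL, hT'⟩ := ih
      exact ⟨L, hL, HThm.tr hT' hT⟩
  · rintro ⟨L, hL, hT⟩
    have hconj : HDer E Γ (conj L) := by
      clear hT
      induction L with
      | nil => exact HDer.thm thmTop
      | cons y L ih =>
        exact HDer.conj (HDer.hyp (hL y (by simp)))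
          (ih fun x hx => hL x (by simp [hx]))
    exact hconj.mp hT

theorem hthm_of_empty {A : Fml} (h : HDer E (∅ : Set Fml) A) : HThm E A := by
  induction h with
  | hyp h => cases h
  | thm h => exact h
  | conj _ _ ih1 ih2 => exact HThm.conj ih1 ih2
  | mp _ hT ih => exact HThm.mp ih hT

theorem hthm_of_singleton {A B : Fml} (h : HDer E ({A} : Set Fml) B) :
    HThm E (A.imp B) := by
  obtain ⟨L, hL, hT⟩ := hder_iff.1 h
  refine HThm.tr (imp_conj fun x hx => ?_) hT
  have : x = A := hL x hx
  subst this; exact HThm.ax8 _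

theorem hder_insert {Γ : Set Fml} {A C : Fml} (h : HDer E (insert A Γ) C) :
    ∃ L, (∀ x ∈ L, x ∈ Γ) ∧ HThm E ((A.and (conj L)).imp C) := by
  obtain ⟨L, hL, hT⟩ := hder_iff.1 h
  refine ⟨L.filter (· ≠ A), ?_, ?_⟩
  · intro x hx
    have hx1 := List.mem_filter.1 hx
    have hx2 : x ≠ A := by simpa using hx1.2
    rcases hL x hx1.1 with h' | h'
    · exact absurd h' hx2
    · exact h'
  · refine HThm.tr (imp_conj fun x hx => ?_) hT
    by_cases hxA : x = A
    · subst hxA; exact HThm.ax3 _ _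
    · exact HThm.tr (HThm.ax4 _ _)
        (mem_imp (List.mem_filter.2 ⟨hx, by simpa using hxA⟩))

theorem hder_orE {Γ : Set Fml} {A B C : Fml} (h : HDer E Γ (A.or B))
    (h1 : HDer E (insert A Γ) C) (h2 : HDer E (insert B Γ) C) : HDer E Γ C := by
  obtain ⟨L0, hL0, hT0⟩ := hder_iff.1 h
  obtain ⟨L1, hL1, hT1⟩ := hder_insert h1
  obtain ⟨L2, hL2, hT2⟩ := hder_insert h2
  refine hder_iff.2 ⟨L0 ++ L1 ++ L2, ?_, ?_⟩
  · intro x hx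
    rcases List.mem_append.1 hx with hx | hx
    · rcases List.mem_append.1 hx with hx | hx
      exacts [hL0 x hx, hL1 x hx]
    · exact hL2 x hx
  · set G := conj (L0 ++ L1 ++ L2) with hG
    have g0 : HThm E (G.imp (conj L0)) :=
      conj_sub fun x hx => List.mem_append_left _ (List.mem_append_left _ hx)
    have g1 : HThm E (G.imp (conj L1)) :=
      conj_sub fun x hx => List.mem_append_left _ (List.mem_append_right _ hx)
    have g2 : HThm E (G.imp (conj L2)) :=
      conj_sub fun x hx => List.mem_append_right _ hx
    have step : HThm E (G.imp (G.and (A.or B))) :=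
      HThm.rc (HThm.ax8 _) (HThm.tr g0 hT0)
    have distr : HThm E ((G.and (A.or B)).imp ((G.and A).or (G.and B))) :=
      HThm.ax7 _ _ _
    have left : HThm E ((G.and A).imp C) :=
      HThm.tr (HThm.rc (HThm.ax4 _ _) (HThm.tr (HThm.ax3 _ _) g1)) hT1
    have right : HThm E ((G.and B).imp C) :=
      HThm.tr (HThm.rc (HThm.ax4 _ _) (HThm.tr (HThm.ax3 _ _) g2)) hT2
    exact HThm.tr (HThm.tr step distr) (HThm.rd left right)

end HFaux

/-- Weakening for natural deduction. -/
def Deriv.weaken {R : Set NRule} : ∀ {Γ Δ : Set Fml} {A : Fml},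
    Γ ⊆ Δ → Deriv R Γ A → Deriv R Δ A
  | _, _, _, h, .hyp _ _ hA => .hyp _ _ (h hA)
  | _, _, _, h, .andI d e => .andI (d.weaken h) (e.weaken h)
  | _, _, _, h, .andE1 d => .andE1 (d.weaken h)
  | _, _, _, h, .andE2 d => .andE2 (d.weaken h)
  | _, _, _, h, .orI1 B d => .orI1 B (d.weaken h)
  | _, _, _, h, .orI2 A d => .orI2 A (d.weaken h)
  | _, _, _, h, .orE d e f =>
      .orE (d.weaken h) (e.weaken (Set.insert_subset_insert h))
        (f.weaken (Set.insert_subset_insert h))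
  | _, _, _, h, .botE A d => .botE A (d.weaken h)
  | _, _, _, _, .impI d => .impI d
  | _, _, _, h, .impE d e => .impE (d.weaken h) e
  | _, _, _, _, .impI1 hm d e => .impI1 hm d e
  | _, _, _, _, .impI2 hm d e => .impI2 hm d e
  | _, _, _, _, .impIN hm a b c d => .impIN hm a b c d
  | _, _, _, _, .impIN2 hm a b => .impIN2 hm a b
  | _, _, _, _, .impIChat C hm d => .impIChat C hm d
  | _, _, _, _, .impIDhat C hm d => .impIDhat C hm d
  | _, _, _, h, .impIAnd hm d e => .impIAnd hm (d.weaken h) (e.weaken h)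
  | _, _, _, h, .impIOr hm d e => .impIOr hm (d.weaken h) (e.weaken h)
  | _, _, _, h, .impITr hm d e => .impITr hm (d.weaken h) (e.weaken h)

namespace HFaux

def EF : Set ExtAx := {ExtAx.I, ExtAx.C, ExtAx.D}
def RF : Set NRule := {NRule.impTr, NRule.impAnd, NRule.impOr}

theorem memTr : NRule.impTr ∈ RF := by simp [RF]
theorem memAnd : NRule.impAnd ∈ RF := by simp [RF]
theorem memOr : NRule.impOr ∈ RF := by simp [RF]

theorem nd_of_thm {A : Fml} (h : HThm EF A) : NDer RF (∅ : Set Fml) A := by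
  induction h with
  | ax1 A B => exact ⟨.impI (.orI1 B (.hyp _ _ rfl))⟩
  | ax2 A B => exact ⟨.impI (.orI2 A (.hyp _ _ rfl))⟩
  | ax3 A B => exact ⟨.impI (.andE1 (.hyp _ _ rfl))⟩
  | ax4 A B => exact ⟨.impI (.andE2 (.hyp _ _ rfl))⟩
  | ax7 A B C =>
      refine ⟨.impI (.orE (.andE2 (.hyp _ _ rfl)) ?_ ?_)⟩
      · exact .orI1 _ (.andI
          (.andE1 (.hyp _ _ (Set.mem_insert_of_mem _ rfl)))
          (.hyp _ _ (Set.mem_insert _ _)))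
      · exact .orI2 _ (.andI
          (.andE1 (.hyp _ _ (Set.mem_insert_of_mem _ rfl)))
          (.hyp _ _ (Set.mem_insert _ _)))
  | ax8 A => exact ⟨.impI (.hyp _ _ rfl)⟩
  | ax14 A => exact ⟨.impI (.botE _ (.hyp _ _ rfl))⟩
  | mp _ _ ih1 ih2 =>
      obtain ⟨d1⟩ := ih1; obtain ⟨d2⟩ := ih2
      exact ⟨.impE d1 d2⟩
  | af B _ ih =>
      obtain ⟨d⟩ := ih
      exact ⟨.impI (d.weaken (Set.empty_subset _))⟩
  | tr _ _ ih1 ih2 =>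
      obtain ⟨d1⟩ := ih1; obtain ⟨d2⟩ := ih2
      exact ⟨.impITr memTr d1 d2⟩
  | rc _ _ ih1 ih2 =>
      obtain ⟨d1⟩ := ih1; obtain ⟨d2⟩ := ih2
      exact ⟨.impIAnd memAnd d1 d2⟩
  | rd _ _ ih1 ih2 =>
      obtain ⟨d1⟩ := ih1; obtain ⟨d2⟩ := ih2
      exact ⟨.impIOr memOr d1 d2⟩
  | conj _ _ ih1 ih2 =>
      obtain ⟨d1⟩ := ih1; obtain ⟨d2⟩ := ih2
      exact ⟨.andI d1 d2⟩
  | @re A B C D _ _ ih1 ih2 =>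
      obtain ⟨d1⟩ := ih1; obtain ⟨d2⟩ := ih2
      refine ⟨.andI (.impI ?_) (.impI ?_)⟩
      · exact .impITr memTr
          (.impITr memTr ((Deriv.andE2 d1).weaken (Set.empty_subset _))
            (.hyp _ _ rfl))
          ((Deriv.andE1 d2).weaken (Set.empty_subset _))
      · exact .impITr memTr
          (.impITr memTr ((Deriv.andE1 d1).weaken (Set.empty_subset _))
            (.hyp _ _ rfl))
          ((Deriv.andE2 d2).weaken (Set.empty_subset _))
  | axI A B C _ =>
      exact ⟨.impI (.impITr memTr (.andE1 (.hyp _ _ rfl)) (.andE2 (.hyp _ _ rfl)))⟩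
  | axC A B C _ =>
      exact ⟨.impI (.impIAnd memAnd (.andE1 (.hyp _ _ rfl)) (.andE2 (.hyp _ _ rfl)))⟩
  | axD A B C _ =>
      exact ⟨.impI (.impIOr memOr (.andE1 (.hyp _ _ rfl)) (.andE2 (.hyp _ _ rfl)))⟩
  | axChat A B C h => simp [EF] at h
  | axDhat A B C h => simp [EF] at h
  | ruleN h => simp [EF] at h
  | ruleN2 h => simp [EF] at h

theorem nd_to_h {Γ : Set Fml} {A : Fml} (d : Deriv RF Γ A) : HDer EF Γ A := by
  induction d with
  | hyp _ _ h => exact .hyp h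
  | andI _ _ ih1 ih2 => exact ih1.conj ih2
  | andE1 _ ih => exact ih.mp (.ax3 _ _)
  | andE2 _ ih => exact ih.mp (.ax4 _ _)
  | orI1 B _ ih => exact ih.mp (.ax1 _ _)
  | orI2 A _ ih => exact ih.mp (.ax2 _ _)
  | orE _ _ _ ih ih1 ih2 => exact hder_orE ih ih1 ih2
  | botE A _ ih => exact ih.mp (.ax14 _)
  | impI _ ih => exact .thm (hthm_of_singleton ih)
  | impE _ _ ih1 ih2 => exact ih1.mp (hthm_of_empty ih2)
  | impI1 hm => simp [RF] at hm
  | impI2 hm => simp [RF] at hm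
  | impIN hm => simp [RF] at hm
  | impIN2 hm => simp [RF] at hm
  | impIChat _ hm => simp [RF] at hm
  | impIDhat _ hm => simp [RF] at hm
  | impIAnd hm _ _ ih1 ih2 =>
      exact (ih1.conj ih2).mp (HThm.axC _ _ _ (by simp [EF]))
  | impIOr hm _ _ ih1 ih2 =>
      exact (ih1.conj ih2).mp (HThm.axD _ _ _ (by simp [EF]))
  | impITr hm _ _ ih1 ih2 =>
      exact (ih1.conj ih2).mp (HThm.axI _ _ _ (by simp [EF]))

end HFaux

theorem hilbert_iff_natded_F (Γ : Set Fml) (A : Fml) :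
    HDer ({ExtAx.I, ExtAx.C, ExtAx.D} : Set ExtAx) Γ A ↔ NDer {NRule.impTr, NRule.impAnd, NRule.impOr} Γ A := by
  show HDer HFaux.EF Γ A ↔ NDer HFaux.RF Γ A
  constructor
  · intro h
    induction h with
    | hyp h => exact ⟨.hyp _ _ h⟩
    | thm h =>
        obtain ⟨d⟩ := HFaux.nd_of_thm h
        exact ⟨d.weaken (Set.empty_subset _)⟩
    | conj _ _ ih1 ih2 =>
        obtain ⟨d1⟩ := ih1; obtain ⟨d2⟩ := ih2
        exact ⟨.andI d1 d2⟩
    | mp _ hT ih =>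
        obtain ⟨d⟩ := ih
        obtain ⟨dT⟩ := HFaux.nd_of_thm hT
        exact ⟨.impE d dT⟩
  · rintro ⟨d⟩
    exact HFaux.nd_to_h d
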